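/- Let G be the ONCF-gadget and let c' : {g1,g2,g3} → {red, blue} be a partial 2-coloring such that c'(g_i) = blue for at least one i ∈ {1,2,3}. Then c' can be extended to a 2-coloring c of all of {g1,…,g10} satisfying: (1) for every i with 4 ≤ i ≤ 9 the open neighborhood N(g_i) contains a uniquely colored vertex (there exists u ∈ N(g_i) with c(u) ≠ c(w) for all w ∈ N(g_i), w ≠ u); and (2) c(g9) = blue, c(g8) = red, c(g4) = c(g5) = blue, and c(g10) = blue. -/
import Mathlib


inductive Color where
  | red
  | blue
deriving DecidableEq

/-- The ONCF-gadget: a graph on ten vertices `g1, …, g10` (here indexed `0, …, 9`)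
with edges g1g4, g2g4, g2g5, g3g5, g4g6, g5g7, g6g8, g7g8, g8g9, g9g10. -/
def oncfGadget : SimpleGraph (Fin 10) :=
  SimpleGraph.fromEdgeSet
    {s(0, 3), s(1, 3), s(1, 4), s(2, 4), s(3, 5),
     s(4, 6), s(5, 7), s(6, 7), s(7, 8), s(8, 9)}

theorem oncf_adj_iff (a b : Fin 10) : oncfGadget.Adj a b ↔
    ((a.val, b.val) ∈ [(0,3),(3,0),(1,3),(3,1),(1,4),(4,1),(2,4),(4,2),(3,5),(5,3),
      (4,6),(6,4),(5,7),(7,5),(6,7),(7,6),(7,8),(8,7),(8,9),(9,8)]) := by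
  simp only [oncfGadget, SimpleGraph.fromEdgeSet_adj, Set.mem_insert_iff,
    Set.mem_singleton_iff, Sym2.eq, Sym2.rel_iff', Prod.mk.injEq, Prod.swap_prod_mk]
  fin_cases a <;> fin_cases b <;> simp <;> decide

instance : DecidableRel oncfGadget.Adj := fun a b => decidable_of_iff _ (oncf_adj_iff a b).symm

def oncfPick (a b : Color) : Color :=
  if a = b then (match a with | .red => .blue | .blue => .red) else .red

/-- Any partial 2-coloring of `g1, g2, g3` of the ONCF-gadget that assigns blue to
at least one of them extends to a 2-coloring of the whole gadget such that the open
neighborhood of every `g_i` with `4 ≤ i ≤ 9` (indices `3 ≤ i ≤ 8`) contains a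
uniquely colored vertex, and moreover `g9` is blue, `g8` is red, `g4`, `g5` and
`g10` are blue. -/
theorem oncfGadget_extension (r1 r2 r3 : Color)
    (hblue : r1 = Color.blue ∨ r2 = Color.blue ∨ r3 = Color.blue) :
    ∃ c : Fin 10 → Color,
      c 0 = r1 ∧ c 1 = r2 ∧ c 2 = r3 ∧
      (∀ i : Fin 10, 3 ≤ i.val → i.val ≤ 8 →
        ∃ u ∈ oncfGadget.neighborSet i,
          ∀ w ∈ oncfGadget.neighborSet i, w ≠ u → c w ≠ c u) ∧
      c 8 = Color.blue ∧ c 7 = Color.red ∧ c 3 = Color.blue ∧ c 4 = Color.blue ∧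
      c 9 = Color.blue := by
  refine ⟨![r1, r2, r3, .blue, .blue, oncfPick r1 r2, oncfPick r2 r3, .red, .blue, .blue],
    rfl, rfl, rfl, ?_, rfl, rfl, rfl, rfl, rfl⟩
  simp only [SimpleGraph.mem_neighborSet]
  revert hblue
  rcases r1 <;> rcases r2 <;> rcases r3 <;> decide
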